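/- Let I ⊆ ℝ be an open interval, a, b, f₄ : ℝ → ℝ, let E be differentiable on I with E'(x) = f₄(x)/2 + b(x), let J be differentiable on I with J(x) ≠ 0 and J'(x) = 2a(x)·exp(−E(x)), and define c(x) = f₄(x)·exp(−E(x)) / J(x). Let B be differentiable on I with B'(x) = f₄(x) + b(x), and G differentiable on I with G'(x) = c(x)·exp(B(x)). Then for every constant C₁₃ ∈ ℝ, the function y(x) = (1/2)·J(x)·exp(E(x)) + exp(B(x))/(C₁₃ − G(x)) satisfies y'(x) = a(x) + b(x)y(x) + c(x)y(x)² at every x ∈ I with C₁₃ − G(x) ≠ 0. -/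

import Mathlib

/-- Theorem 9 (Case 9): with `E' = f₄/2 + b`, `J ≠ 0`, `J' = 2a · exp(−E)`,
`c = f₄ · exp(−E)/J`, `B' = f₄ + b` and `G' = c · exp B`, the function
`y = (1/2)·J·exp E + exp B / (C₁₃ − G)` solves the Riccati equation wherever
`C₁₃ − G ≠ 0`. -/
theorem riccati_case9_general
    (p q : ℝ) (a b c f₄ E J B G : ℝ → ℝ)
    (hE : ∀ x ∈ Set.Ioo p q, HasDerivAt E (f₄ x / 2 + b x) x)
    (hJne : ∀ x ∈ Set.Ioo p q, J x ≠ 0)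
    (hJ : ∀ x ∈ Set.Ioo p q, HasDerivAt J (2 * a x * Real.exp (-E x)) x)
    (hcdef : ∀ x ∈ Set.Ioo p q, c x = f₄ x * Real.exp (-E x) / J x)
    (hB : ∀ x ∈ Set.Ioo p q, HasDerivAt B (f₄ x + b x) x)
    (hG : ∀ x ∈ Set.Ioo p q, HasDerivAt G (c x * Real.exp (B x)) x)
    (C₁₃ : ℝ) :
    ∀ x ∈ Set.Ioo p q, C₁₃ - G x ≠ 0 →
      HasDerivAt (fun t =>
          (1 / 2) * J t * Real.exp (E t) + Real.exp (B t) / (C₁₃ - G t))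
        (a x + b x * ((1 / 2) * J x * Real.exp (E x)
            + Real.exp (B x) / (C₁₃ - G x))
          + c x * ((1 / 2) * J x * Real.exp (E x)
            + Real.exp (B x) / (C₁₃ - G x)) ^ 2) x := by
  intro x hx hne
  have hEx := hE x hx
  have hJx := hJ x hx
  have hBx := hB x hx
  have hGx := hG x hx
  have hJn := hJne x hx
  have hc := hcdef x hx
  have h1 : HasDerivAt (fun t => (1 / 2) * J t * Real.exp (E t))
      ((1/2) * ((2 * a x * Real.exp (-E x)) * Real.exp (E x)
        + J x * (Real.exp (E x) * (f₄ x / 2 + b x)))) x := by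
    have := (hJx.mul (hEx.exp)).const_mul (1/2 : ℝ)
    simpa [mul_assoc] using this
  have h2 : HasDerivAt (fun t => Real.exp (B t) / (C₁₃ - G t))
      (((Real.exp (B x) * (f₄ x + b x)) * (C₁₃ - G x)
        - Real.exp (B x) * (0 - c x * Real.exp (B x))) / (C₁₃ - G x) ^ 2) x := by
    exact (hBx.exp).div ((hasDerivAt_const x C₁₃).sub hGx) hne
  have h := h1.add h2
  refine h.congr_deriv ?_
  rw [hc, Real.exp_neg]
  have hexp := Real.exp_ne_zero (E x)
  field_simp
  ring
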